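/- Every positive rational appears exactly once in the Stern–Brocot tree: the map from {0,1}* to ℚ>0 given by w ↦ (b+d)/(a+c) where M_w = [[a,b],[c,d]] is the matrix tree value at w, is a bijection. -/

import Mathlib

open Matrix

def SL2N (M : Matrix (Fin 2) (Fin 2) ℤ) : Prop :=
  (∀ i j, 0 ≤ M i j) ∧ M.det = 1

def Lmat : Matrix (Fin 2) (Fin 2) ℤ := !![1, 0; 1, 1]

def Rmat : Matrix (Fin 2) (Fin 2) ℤ := !![1, 1; 0, 1]

def matOf (w : List Bool) : Matrix (Fin 2) (Fin 2) ℤ :=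
  w.foldl (fun acc b => (if b then Rmat else Lmat) * acc) 1

def sbMatVal (M : Matrix (Fin 2) (Fin 2) ℤ) : ℚ :=
  ((M 0 1 + M 1 1 : ℤ) : ℚ) / ((M 0 0 + M 1 0 : ℤ) : ℚ)

/- Auxiliary development -/

def fSB : List Bool → ℚ
  | [] => 1
  | true :: w => fSB w + 1
  | false :: w => fSB w / (fSB w + 1)

lemma fSB_pos : ∀ w, 0 < fSB w
  | [] => one_pos
  | true :: w => by have := fSB_pos w; simp [fSB]; linarith
  | false :: w => by
      have := fSB_pos w
      simp only [fSB]
      positivity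

lemma fSB_true_gt (w : List Bool) : 1 < fSB (true :: w) := by
  have := fSB_pos w; simp [fSB]; linarith

lemma fSB_false_lt (w : List Bool) : fSB (false :: w) < 1 := by
  have := fSB_pos w
  simp only [fSB]
  rw [div_lt_one (by linarith)]
  linarith

lemma fSB_inj : ∀ w1 w2 : List Bool, fSB w1 = fSB w2 → w1 = w2
  | [], [], _ => rfl
  | [], true :: w2, h => by
      exfalso; have := fSB_pos w2; simp only [fSB] at h; linarith
  | [], false :: w2, h => by
      exfalso
      have h1 := fSB_false_lt w2
      simp only [fSB] at h h1
      linarith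
  | true :: w1, [], h => by
      exfalso; have := fSB_pos w1; simp only [fSB] at h; linarith
  | false :: w1, [], h => by
      exfalso
      have h1 := fSB_false_lt w1
      simp only [fSB] at h h1
      linarith
  | true :: w1, true :: w2, h => by
      have : fSB w1 = fSB w2 := by simp only [fSB] at h; linarith
      rw [fSB_inj w1 w2 this]
  | true :: w1, false :: w2, h => by
      have h1 := fSB_true_gt w1; have h2 := fSB_false_lt w2; linarith [h ▸ h1]
  | false :: w1, true :: w2, h => by
      have h1 := fSB_false_lt w1; have h2 := fSB_true_gt w2; rw [h] at h1; linarith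
  | false :: w1, false :: w2, h => by
      have p1 := fSB_pos w1; have p2 := fSB_pos w2
      simp only [fSB] at h
      have h1 : (fSB w1 + 1) ≠ 0 := by linarith
      have h2 : (fSB w2 + 1) ≠ 0 := by linarith
      field_simp at h
      have : fSB w1 = fSB w2 := by nlinarith
      rw [fSB_inj w1 w2 this]

lemma fSB_surj_aux : ∀ n a b : ℕ, a + b ≤ n → 0 < a → 0 < b →
    ∃ w, fSB w = (a : ℚ) / b := by
  intro n
  induction n with
  | zero => intro a b h ha hb; omega
  | succ n ih =>
    intro a b h ha hb
    rcases lt_trichotomy a b with hab | hab | hab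
    · -- a < b : use false :: w with fSB w = a/(b-a)
      obtain ⟨w, hw⟩ := ih a (b - a) (by omega) ha (by omega)
      refine ⟨false :: w, ?_⟩
      have hba : ((b - a : ℕ) : ℚ) = (b : ℚ) - a := by
        push_cast [Nat.cast_sub hab.le]; ring
      have hbapos : (0 : ℚ) < (b : ℚ) - a := by
        have : (a : ℚ) < b := by exact_mod_cast hab
        linarith
      have hbpos : (0 : ℚ) < b := by exact_mod_cast hb
      have hapos : (0 : ℚ) < a := by exact_mod_cast ha
      simp only [fSB, hw, hba]
      rw [div_add_one (by linarith : ((b:ℚ) - a) ≠ 0)]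
      have h2 : ((a : ℚ) + ((b:ℚ) - a)) = (b : ℚ) := by ring
      rw [h2, div_div_div_cancel_right₀ (by linarith : ((b:ℚ) - a) ≠ 0)]
    · exact ⟨[], by subst hab; simp [fSB, div_self (by positivity : ((a:ℚ)) ≠ 0)]⟩
    · -- b < a : use true :: w with fSB w = (a-b)/b
      obtain ⟨w, hw⟩ := ih (a - b) b (by omega) (by omega) hb
      refine ⟨true :: w, ?_⟩
      have hab' : ((a - b : ℕ) : ℚ) = (a : ℚ) - b := by
        push_cast [Nat.cast_sub hab.le]; ring
      have hbpos : (0 : ℚ) < b := by exact_mod_cast hb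
      simp only [fSB, hw, hab']
      field_simp
      ring
  
lemma fSB_surj (q : ℚ) (hq : 0 < q) : ∃ w, fSB w = q := by
  obtain ⟨w, hw⟩ := fSB_surj_aux (q.num.toNat + q.den) q.num.toNat q.den le_rfl
    (by have := Rat.num_pos.mpr hq; omega)
    q.pos
  refine ⟨w, ?_⟩
  rw [hw]
  have hn : ((q.num.toNat : ℤ) : ℚ) = (q.num : ℚ) := by
    norm_cast
    exact Int.toNat_of_nonneg (Rat.num_pos.mpr hq).le
  push_cast at hn ⊢
  rw [hn, Rat.num_div_den]

/- relate matOf to fSB -/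

lemma foldl_mul_eq (g : Bool → Matrix (Fin 2) (Fin 2) ℤ) :
    ∀ (w : List Bool) (a : Matrix (Fin 2) (Fin 2) ℤ),
      w.foldl (fun acc b => g b * acc) a = w.foldl (fun acc b => g b * acc) 1 * a
  | [], a => by simp
  | c :: w, a => by
      simp only [List.foldl_cons]
      rw [foldl_mul_eq g w (g c * a), foldl_mul_eq g w (g c * 1)]
      simp [Matrix.mul_assoc]

lemma matOf_cons (b : Bool) (w : List Bool) :
    matOf (b :: w) = matOf w * (if b then Rmat else Lmat) := by
  simp only [matOf, List.foldl_cons]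
  rw [foldl_mul_eq]
  simp

def Sof (w : List Bool) : ℤ := matOf w 0 0 + matOf w 1 0
def Pof (w : List Bool) : ℤ := matOf w 0 1 + matOf w 1 1

lemma Sof_true (w : List Bool) : Sof (true :: w) = Sof w := by
  simp [Sof, matOf_cons, Rmat, Matrix.mul_apply, Fin.sum_univ_two]

lemma Pof_true (w : List Bool) : Pof (true :: w) = Sof w + Pof w := by
  simp [Pof, Sof, matOf_cons, Rmat, Matrix.mul_apply, Fin.sum_univ_two]; ring

lemma Sof_false (w : List Bool) : Sof (false :: w) = Sof w + Pof w := by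
  simp [Pof, Sof, matOf_cons, Lmat, Matrix.mul_apply, Fin.sum_univ_two]; ring

lemma Pof_false (w : List Bool) : Pof (false :: w) = Pof w := by
  simp [Pof, matOf_cons, Lmat, Matrix.mul_apply, Fin.sum_univ_two]

lemma SP_pos : ∀ w : List Bool, 0 < Sof w ∧ 0 < Pof w
  | [] => by constructor <;> simp [Sof, Pof, matOf, Matrix.one_apply]
  | true :: w => by
      have := SP_pos w
      rw [Sof_true, Pof_true]
      constructor <;> linarith [this.1, this.2]
  | false :: w => by
      have := SP_pos w
      rw [Sof_false, Pof_false]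
      constructor <;> linarith [this.1, this.2]

lemma sbMatVal_eq (w : List Bool) : sbMatVal (matOf w) = (Pof w : ℚ) / (Sof w : ℚ) := rfl

lemma sb_eq_fSB : ∀ w : List Bool, sbMatVal (matOf w) = fSB w
  | [] => by
      simp [sbMatVal, matOf, Matrix.one_apply, fSB]
  | true :: w => by
      have hS := (SP_pos w).1
      have hP := (SP_pos w).2
      have hS' : ((Sof w : ℚ)) ≠ 0 := by positivity
      rw [sbMatVal_eq, Sof_true, Pof_true]
      simp only [fSB, ← sb_eq_fSB w, sbMatVal_eq]
      push_cast
      field_simp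
      ring
  | false :: w => by
      have hS := (SP_pos w).1
      have hP := (SP_pos w).2
      have hS' : ((Sof w : ℚ)) ≠ 0 := by positivity
      have hSP : ((Sof w : ℚ)) + (Pof w : ℚ) ≠ 0 := by positivity
      rw [sbMatVal_eq, Sof_false, Pof_false]
      simp only [fSB, ← sb_eq_fSB w, sbMatVal_eq]
      push_cast
      rw [div_add_one hS']
      have h2 : ((Pof w : ℚ) + (Sof w : ℚ)) = ((Sof w : ℚ) + (Pof w : ℚ)) := by ring
      rw [h2, div_div_div_cancel_right₀ hS']

/-- Every positive rational appears exactly once in the Stern–Brocot tree. -/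
theorem stmt16 :
    (∀ w : List Bool, 0 < sbMatVal (matOf w)) ∧
    (∀ q : ℚ, 0 < q → ∃! w : List Bool, sbMatVal (matOf w) = q) := by
  constructor
  · intro w
    rw [sb_eq_fSB]
    exact fSB_pos w
  · intro q hq
    obtain ⟨w, hw⟩ := fSB_surj q hq
    refine ⟨w, ?_, ?_⟩
    · show sbMatVal (matOf w) = q
      rw [sb_eq_fSB]; exact hw
    · intro w' hw'
      apply fSB_inj
      rw [← sb_eq_fSB w', hw', ← hw]
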